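/- arXiv:2605.00600 — 2 statements merged into one kernel-verified Lean document; each statement's English description precedes it below -/
import Mathlib

section
/- Let K ≥ 2, let α ∈ ℝ^K satisfy α_k > 1 for every k, set α₀ = ∑_{k=1}^K α_k, and let y ∈ {0,1}^K be a one-hot vector (∑_{k=1}^K y_k = 1). Define p̃* ∈ ℝ^K by p̃*_k = (α_k − y_k)/(α₀ − 1). Then for every p ∈ ℝ^K with p_k > 0 for all k and ∑_{k=1}^K p_k = 1, one has α₀·log α₀ + ∑_{k=1}^K α_k·log(p_k/α_k) − ∑_{k=1}^K y_k·log p_k ≤ α₀·log α₀ + ∑_{k=1}^K α_k·log(p̃*_k/α_k) − ∑_{k=1}^K y_k·log p̃*_k; that is, p̃* maximizes the objective log g(p) + ℓ(p,y) over the interior of the probability simplex. -/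
/-- Proposition 1 (closed-form maximizer): for Dirichlet parameters `α` with
`α k > 1` and a one-hot label `y`, the point `p̃* k = (α k - y k) / (α₀ - 1)`
maximizes `log g(p) + ℓ(p, y)` over the interior of the probability simplex. -/
theorem dappr_prop1_maximizer
    (K : ℕ) (hK : 2 ≤ K) (α y : Fin K → ℝ)
    (hα : ∀ k, 1 < α k)
    (hy01 : ∀ k, y k = 0 ∨ y k = 1) (hysum : ∑ k, y k = 1)
    (p : Fin K → ℝ) (hp : ∀ k, 0 < p k) (hpsum : ∑ k, p k = 1) :
    (∑ k, α k) * Real.log (∑ k, α k)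
        + ∑ k, α k * Real.log (p k / α k)
        - ∑ k, y k * Real.log (p k)
      ≤ (∑ k, α k) * Real.log (∑ k, α k)
        + ∑ k, α k * Real.log ((α k - y k) / ((∑ j, α j) - 1) / α k)
        - ∑ k, y k * Real.log ((α k - y k) / ((∑ j, α j) - 1)) := by
  set C : ℝ := (∑ j, α j) - 1 with hCdef
  have hKpos : (Finset.univ : Finset (Fin K)).Nonempty := by
    refine Finset.univ_nonempty_iff.mpr ?_
    exact Fin.pos_iff_nonempty.mp (by omega)
  have hsum_gt : (K : ℝ) < ∑ j, α j := by
    calc (K : ℝ) = ∑ _j : Fin K, (1 : ℝ) := by simp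
    _ < ∑ j, α j := Finset.sum_lt_sum_of_nonempty hKpos fun i _ => hα i
  have hC : 0 < C := by
    have : (1 : ℝ) ≤ (K : ℝ) := by exact_mod_cast Nat.one_le_of_lt hK
    simp only [hCdef]; linarith
  have hc : ∀ k, 0 < α k - y k := by
    intro k
    rcases hy01 k with h | h <;> simp [h] <;> linarith [hα k]
  have hcsum : ∑ k, (α k - y k) = C := by
    rw [Finset.sum_sub_distrib, hysum, hCdef]
  -- key pointwise inequality
  have key : ∀ k, (α k - y k) * Real.log (p k) ≤
      (α k - y k) * Real.log ((α k - y k) / C) + (C * p k - (α k - y k)) := by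
    intro k
    have hcpos := hc k
    have hx : 0 < p k * C / (α k - y k) := div_pos (mul_pos (hp k) hC) hcpos
    have hlog := Real.log_le_sub_one_of_pos hx
    have hrw : Real.log (p k * C / (α k - y k)) =
        Real.log (p k) - Real.log ((α k - y k) / C) := by
      rw [Real.log_div (mul_pos (hp k) hC).ne' hcpos.ne', Real.log_mul (hp k).ne' hC.ne',
        Real.log_div hcpos.ne' hC.ne']
      ring
    rw [hrw] at hlog
    have h2 : (α k - y k) * (Real.log (p k) - Real.log ((α k - y k) / C)) ≤
        (α k - y k) * (p k * C / (α k - y k) - 1) :=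
      mul_le_mul_of_nonneg_left hlog hcpos.le
    have h3 : (α k - y k) * (p k * C / (α k - y k) - 1) = C * p k - (α k - y k) := by
      field_simp
    nlinarith [h2, h3]
  have main : ∑ k, (α k - y k) * Real.log (p k) ≤
      ∑ k, (α k - y k) * Real.log ((α k - y k) / C) := by
    calc ∑ k, (α k - y k) * Real.log (p k)
        ≤ ∑ k, ((α k - y k) * Real.log ((α k - y k) / C) + (C * p k - (α k - y k))) :=
          Finset.sum_le_sum fun k _ => key k
      _ = ∑ k, (α k - y k) * Real.log ((α k - y k) / C)
            + (C * ∑ k, p k - ∑ k, (α k - y k)) := by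
          rw [Finset.sum_add_distrib, Finset.sum_sub_distrib, ← Finset.mul_sum]
      _ = ∑ k, (α k - y k) * Real.log ((α k - y k) / C) := by
          rw [hpsum, hcsum]; ring
  -- rewrite the logs of quotients
  have h1 : ∑ k, α k * Real.log (p k / α k)
      = ∑ k, (α k * Real.log (p k) - α k * Real.log (α k)) :=
    Finset.sum_congr rfl fun k _ => by
      rw [Real.log_div (hp k).ne' (by linarith [hα k] : α k ≠ 0)]; ring
  have h2 : ∑ k, α k * Real.log ((α k - y k) / C / α k)
      = ∑ k, (α k * Real.log ((α k - y k) / C) - α k * Real.log (α k)) :=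
    Finset.sum_congr rfl fun k _ => by
      rw [Real.log_div (div_pos (hc k) hC).ne'
        (by linarith [hα k] : α k ≠ 0)]; ring
  have e1 : ∑ k, (α k - y k) * Real.log (p k)
      = ∑ k, α k * Real.log (p k) - ∑ k, y k * Real.log (p k) := by
    rw [← Finset.sum_sub_distrib]
    exact Finset.sum_congr rfl fun k _ => by ring
  have e2 : ∑ k, (α k - y k) * Real.log ((α k - y k) / C)
      = ∑ k, α k * Real.log ((α k - y k) / C)
        - ∑ k, y k * Real.log ((α k - y k) / C) := by
    rw [← Finset.sum_sub_distrib]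
    exact Finset.sum_congr rfl fun k _ => by ring
  rw [h1, h2, Finset.sum_sub_distrib, Finset.sum_sub_distrib]
  rw [e1, e2] at main
  linarith
end

section
/- Let K ≥ 2, let α ∈ ℝ^K satisfy α_k > 1 for every k, set α₀ = ∑_{k=1}^K α_k, and let y ∈ {0,1}^K be one-hot. Then the supremum over all p in the interior of the probability simplex of the quantity α₀·log α₀ + ∑_{k=1}^K α_k·log(p_k/α_k) − ∑_{k=1}^K y_k·log p_k equals α₀·log α₀ − ∑_{k=1}^K α_k·log α_k + ∑_{k=1}^K (α_k − y_k)·log((α_k − y_k)/(α₀ − 1)), and this supremum is attained at p_k = (α_k − y_k)/(α₀ − 1). -/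
open Real Finset

lemma gibbs_aux (K : ℕ) (β p : Fin K → ℝ) (hβ : ∀ k, 0 < β k) (hp : ∀ k, 0 < p k)
    (hps : ∑ k, p k = 1) (hSpos : 0 < ∑ j, β j) :
    ∑ k, β k * Real.log (p k) ≤ ∑ k, β k * Real.log (β k / (∑ j, β j)) := by
  set S := ∑ j, β j with hS
  rw [← sub_nonpos, ← Finset.sum_sub_distrib]
  have key : ∀ k : Fin K, β k * Real.log (p k) - β k * Real.log (β k / S)
      ≤ p k * S - β k := by
    intro k
    have hbk := hβ k
    have hpk := hp k
    have h1 : Real.log (p k) - Real.log (β k / S) = Real.log (p k * S / β k) := by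
      rw [Real.log_div (by positivity) hbk.ne', Real.log_mul hpk.ne' hSpos.ne',
        Real.log_div hbk.ne' hSpos.ne']
      ring
    have h2 : Real.log (p k * S / β k) ≤ p k * S / β k - 1 :=
      Real.log_le_sub_one_of_pos (by positivity)
    calc β k * Real.log (p k) - β k * Real.log (β k / S)
        = β k * Real.log (p k * S / β k) := by rw [← h1]; ring
      _ ≤ β k * (p k * S / β k - 1) := by
          exact mul_le_mul_of_nonneg_left h2 hbk.le
      _ = p k * S - β k := by field_simp
  calc ∑ k, (β k * Real.log (p k) - β k * Real.log (β k / S))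
      ≤ ∑ k, (p k * S - β k) := Finset.sum_le_sum (fun k _ => key k)
    _ = (∑ k, p k) * S - S := by rw [Finset.sum_sub_distrib, ← Finset.sum_mul]
    _ = 0 := by rw [hps]; ring

/-- Closed-form value of the per-sample surrogate likelihood: the supremum over
the interior of the probability simplex of
`α₀·log α₀ + ∑ k, α k·log (p k / α k) - ∑ k, y k·log (p k)` equals
`α₀·log α₀ - ∑ k, α k·log (α k) + ∑ k, (α k - y k)·log ((α k - y k)/(α₀ - 1))`,
and it is attained at `p k = (α k - y k) / (α₀ - 1)`. -/
theorem dappr_surrogate_value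
    (K : ℕ) (hK : 2 ≤ K) (α y : Fin K → ℝ)
    (hα : ∀ k, 1 < α k)
    (hy01 : ∀ k, y k = 0 ∨ y k = 1) (hysum : ∑ k, y k = 1) :
    sSup {v : ℝ | ∃ p : Fin K → ℝ, (∀ k, 0 < p k) ∧ (∑ k, p k = 1) ∧
        v = (∑ k, α k) * Real.log (∑ k, α k)
            + ∑ k, α k * Real.log (p k / α k)
            - ∑ k, y k * Real.log (p k)}
      = (∑ k, α k) * Real.log (∑ k, α k)
          - ∑ k, α k * Real.log (α k)
          + ∑ k, (α k - y k) * Real.log ((α k - y k) / ((∑ j, α j) - 1))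
    ∧ (∀ k, 0 < (α k - y k) / ((∑ j, α j) - 1))
    ∧ (∑ k, (α k - y k) / ((∑ j, α j) - 1) = 1)
    ∧ (∑ k, α k) * Real.log (∑ k, α k)
          + ∑ k, α k * Real.log ((α k - y k) / ((∑ j, α j) - 1) / α k)
          - ∑ k, y k * Real.log ((α k - y k) / ((∑ j, α j) - 1))
      = (∑ k, α k) * Real.log (∑ k, α k)
          - ∑ k, α k * Real.log (α k)
          + ∑ k, (α k - y k) * Real.log ((α k - y k) / ((∑ j, α j) - 1)) := by
  have hK0 : 0 < K := by omega
  set A := ∑ j, α j with hA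
  set S := A - 1 with hSdef
  set β := fun k => α k - y k with hβdef
  have hβpos : ∀ k, 0 < β k := by
    intro k
    rcases hy01 k with h | h <;> simp [hβdef, h] <;> linarith [hα k]
  have hAge : 2 ≤ A := by
    have : ∀ k : Fin K, (1:ℝ) ≤ α k := fun k => (hα k).le
    calc (2:ℝ) = (K:ℝ) * 1 - (K - 2) := by ring
      _ ≤ A := by
        have h1 : (2:ℝ) ≤ (K:ℝ) := by exact_mod_cast hK
        have : (K:ℝ) * 1 ≤ A := by
          rw [mul_one, hA]
          simpa using Finset.card_nsmul_le_sum Finset.univ α 1 (fun k _ => this k)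
        linarith
  have hSpos : 0 < S := by simp [hSdef]; linarith
  have hβsum : ∑ k, β k = S := by
    simp [hβdef, Finset.sum_sub_distrib, hysum, hSdef, hA]
  have hpstar_pos : ∀ k, 0 < β k / S := fun k => div_pos (hβpos k) hSpos
  have hpstar_sum : ∑ k, β k / S = 1 := by
    rw [← Finset.sum_div, hβsum, div_self hSpos.ne']
  -- key rewriting: objective at arbitrary p
  have obj_eq : ∀ p : Fin K → ℝ, (∀ k, 0 < p k) →
      A * Real.log A + ∑ k, α k * Real.log (p k / α k) - ∑ k, y k * Real.log (p k)
      = A * Real.log A - ∑ k, α k * Real.log (α k) + ∑ k, β k * Real.log (p k) := by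
    intro p hp
    have : ∀ k : Fin K, α k * Real.log (p k / α k) =
        α k * Real.log (p k) - α k * Real.log (α k) := by
      intro k
      rw [Real.log_div (hp k).ne' (by linarith [hα k])]; ring
    simp only [this, Finset.sum_sub_distrib]
    simp only [hβdef, sub_mul, Finset.sum_sub_distrib]
    ring
  have hval : A * Real.log A + ∑ k, α k * Real.log (β k / S / α k)
      - ∑ k, y k * Real.log (β k / S)
      = A * Real.log A - ∑ k, α k * Real.log (α k)
        + ∑ k, β k * Real.log (β k / S) := obj_eq _ hpstar_pos
  refine ⟨?_, hpstar_pos, hpstar_sum, hval⟩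
  apply IsGreatest.csSup_eq
  constructor
  · exact ⟨fun k => β k / S, hpstar_pos, hpstar_sum, hval.symm⟩
  · rintro v ⟨p, hp, hps, rfl⟩
    rw [obj_eq p hp]
    have := gibbs_aux K β p hβpos hp hps (hβsum ▸ hSpos)
    rw [hβsum] at this
    linarith
end
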